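/- Let 1 ≤ N ≤ L be integers, z ∈ ℂ*, ζ ∈ ℂ with |ζ| = 1, and let w be a complex number (w ∉ {0,1}) satisfying w^L (1-w^{-1})^N = z^L as part of a solution (z, w_1, …, w_N) to the decoupled Bethe equations with w = w_i. Then |z| ≤ |w| + N/L. -/

import Mathlib

/-- If `w ∉ {0,1}` satisfies the decoupled Bethe equation
`w^L (1-w⁻¹)^N = z^L` (with `1 ≤ N ≤ L`, `z ≠ 0`), then `|z| ≤ |w| + N/L`. -/
theorem bethe_root_location (L N : ℕ) (hN : 1 ≤ N) (hNL : N ≤ L)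
    (z w : ℂ) (hz : z ≠ 0) (h0 : w ≠ 0) (h1 : w ≠ 1)
    (hq : w ^ L * (1 - w⁻¹) ^ N = z ^ L) :
    ‖z‖ ≤ ‖w‖ + (N : ℝ) / L := by
  have hL : 1 ≤ L := le_trans hN hNL
  have hLpos : (0:ℝ) < L := by exact_mod_cast Nat.lt_of_lt_of_le Nat.zero_lt_one hL
  set a := ‖w‖ with ha
  set b := ‖z‖ with hb
  have ha0 : 0 < a := by simpa [ha] using norm_pos_iff.mpr h0
  have hb0 : 0 ≤ b := norm_nonneg z
  -- step 1: b^L ≤ a^(L-N) * (a+1)^N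
  have habs : a ^ L * ‖1 - w⁻¹‖ ^ N = b ^ L := by
    have := congrArg norm hq
    simpa [norm_mul, norm_pow] using this
  have h1w : ‖1 - w⁻¹‖ ≤ (a + 1) / a := by
    calc ‖1 - w⁻¹‖ ≤ ‖(1:ℂ)‖ + ‖w⁻¹‖ :=
          norm_sub_le 1 w⁻¹
      _ = 1 + 1 / a := by simp [norm_inv, one_div, ha]
      _ = (a + 1) / a := by field_simp
  have key : b ^ L ≤ a ^ (L - N) * (a + 1) ^ N := by
    rw [← habs]
    have h2 : ‖1 - w⁻¹‖ ^ N ≤ ((a + 1) / a) ^ N :=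
      pow_le_pow_left₀ (norm_nonneg _) h1w N
    calc a ^ L * ‖1 - w⁻¹‖ ^ N ≤ a ^ L * ((a + 1) / a) ^ N := by
          exact mul_le_mul_of_nonneg_left h2 (pow_nonneg ha0.le _)
      _ = a ^ (L - N) * (a + 1) ^ N := by
          rw [div_pow, pow_sub₀ a ha0.ne' hNL]
          field_simp
  -- step 2: rpow manipulation
  have ha1 : (0:ℝ) ≤ a + 1 := by linarith
  have hrpow : b ≤ a ^ (((L:ℝ) - N) / L) * (a + 1) ^ ((N:ℝ) / L) := by
    have h3 : b = (b ^ L) ^ ((1:ℝ)/L) := by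
      rw [← Real.rpow_natCast b L, ← Real.rpow_mul hb0]
      rw [mul_one_div, div_self hLpos.ne', Real.rpow_one]
    rw [h3]
    have h4 : (b ^ L) ^ ((1:ℝ)/L) ≤ (a ^ (L - N) * (a + 1) ^ N) ^ ((1:ℝ)/L) :=
      Real.rpow_le_rpow (pow_nonneg hb0 _) key (by positivity)
    refine h4.trans_eq ?_
    rw [Real.mul_rpow (pow_nonneg ha0.le _) (pow_nonneg ha1 _),
      ← Real.rpow_natCast a (L - N), ← Real.rpow_natCast (a+1) N,
      ← Real.rpow_mul ha0.le, ← Real.rpow_mul ha1]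
    congr 1
    · congr 1
      rw [Nat.cast_sub hNL]
      field_simp
    · field_simp
  -- step 3: AM-GM
  have hw1 : (0:ℝ) ≤ ((L:ℝ) - N) / L := by
    apply div_nonneg _ hLpos.le
    have : (N:ℝ) ≤ L := by exact_mod_cast hNL
    linarith
  have hw2 : (0:ℝ) ≤ (N:ℝ) / L := by positivity
  have hsum : ((L:ℝ) - N) / L + (N:ℝ) / L = 1 := by field_simp; ring
  have amgm := Real.geom_mean_le_arith_mean2_weighted hw1 hw2 ha0.le ha1 hsum
  refine hrpow.trans (amgm.trans_eq ?_)
  field_simp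
  ring
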